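/- Let H ≥ 1, α_k = (H+1)/(H+k), α_k^t = α_t ∏_{i=t+1}^k(1-α_i), and A_k = ∑_{t=1}^k α_k^t α_t². Then A_k ≤ (H+1)³/(H² k) for all k ≥ 1. -/

import Mathlib

open Finset

theorem A_k_upper_bound
    (H : ℕ) (hH : 1 ≤ H)
    (α : ℕ → ℝ) (hα : ∀ k, α k = (H + 1 : ℝ) / (H + k))
    (αw : ℕ → ℕ → ℝ)
    (hαw : ∀ k t, αw k t = α t * ∏ i ∈ Finset.Icc (t + 1) k, (1 - α i))
    (A : ℕ → ℝ) (hA : ∀ k, A k = ∑ t ∈ Finset.Icc 1 k, αw k t * (α t) ^ 2) :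
    ∀ k ≥ 1, A k ≤ (H + 1 : ℝ) ^ 3 / ((H : ℝ) ^ 2 * k) := by
  have hHpos : (0:ℝ) < H := by exact_mod_cast hH
  have hden : ∀ k : ℕ, (0:ℝ) < (H:ℝ) + k := fun k => by positivity
  have hαpos : ∀ k, 0 < α k := fun k => by
    rw [hα]; exact div_pos (by positivity) (hden k)
  have hαle1 : ∀ k, 1 ≤ k → α k ≤ 1 := fun k hk => by
    rw [hα]
    rw [div_le_one (hden k)]
    have : (1:ℝ) ≤ k := by exact_mod_cast hk
    linarith
  have hsub : ∀ i, 1 ≤ i → 0 ≤ 1 - α i := fun i hi => by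
    linarith [hαle1 i hi]
  have hαw_nonneg : ∀ k t, 1 ≤ t → 0 ≤ αw k t := fun k t ht => by
    rw [hαw]
    apply mul_nonneg (le_of_lt (hαpos t))
    apply Finset.prod_nonneg
    intro i hi
    have := (mem_Icc.1 hi).1
    exact hsub i (by omega)
  have hα_anti : ∀ s t : ℕ, s ≤ t → α t ≤ α s := fun s t hst => by
    rw [hα, hα]
    apply div_le_div_of_nonneg_left (by positivity) (hden s)
    have : (s:ℝ) ≤ t := by exact_mod_cast hst
    linarith
  -- recursion for αw
  have hαw_step : ∀ k t, t ≤ k → αw (k+1) t = αw k t * (1 - α (k+1)) := fun k t htk => by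
    rw [hαw, hαw, Finset.prod_Icc_succ_top (by omega : t + 1 ≤ k + 1)]
    ring
  have hαw_self : ∀ t, αw t t = α t := fun t => by
    rw [hαw, Finset.Icc_eq_empty (by omega), Finset.prod_empty, mul_one]
  have hα1 : α 1 = 1 := by
    rw [hα]; push_cast; rw [div_self (by linarith)]
  -- weights sum to 1
  have hweights : ∀ k, 1 ≤ k → ∑ t ∈ Finset.Icc 1 k, αw k t = 1 := by
    intro k hk
    induction k, hk using Nat.le_induction with
    | base => simp [hαw_self, hα1]
    | succ k hk ih =>
      rw [← Finset.Ico_add_one_right_eq_Icc, Finset.sum_Ico_succ_top (by omega), Finset.Ico_add_one_right_eq_Icc]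
      rw [hαw_self]
      have : ∑ t ∈ Finset.Icc 1 k, αw (k+1) t
          = ∑ t ∈ Finset.Icc 1 k, αw k t * (1 - α (k+1)) := by
        apply Finset.sum_congr rfl
        intro t ht
        exact hαw_step k t (mem_Icc.1 ht).2
      rw [this, ← Finset.sum_mul, ih]
      ring
  -- A recursion
  have hA_rec : ∀ k, 1 ≤ k → A (k+1) = (1 - α (k+1)) * A k + α (k+1) ^ 3 := by
    intro k hk
    rw [hA, hA]
    rw [← Finset.Ico_add_one_right_eq_Icc, Finset.sum_Ico_succ_top (by omega), Finset.Ico_add_one_right_eq_Icc]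
    rw [hαw_self]
    have : ∑ t ∈ Finset.Icc 1 k, αw (k+1) t * α t ^ 2
        = ∑ t ∈ Finset.Icc 1 k, (αw k t * (1 - α (k+1))) * α t ^ 2 := by
      apply Finset.sum_congr rfl
      intro t ht
      rw [hαw_step k t (mem_Icc.1 ht).2]
    rw [this]
    have hmul : ∑ t ∈ Finset.Icc 1 k, αw k t * (1 - α (k+1)) * α t ^ 2
        = (1 - α (k+1)) * ∑ t ∈ Finset.Icc 1 k, αw k t * α t ^ 2 := by
      rw [Finset.mul_sum]
      apply Finset.sum_congr rfl
      intro t _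
      ring
    rw [hmul]
    ring
  -- A lower bound
  have hA_lb : ∀ k, 1 ≤ k → α (k+1) ^ 2 ≤ A k := by
    intro k hk
    rw [hA]
    calc α (k+1)^2 = ∑ t ∈ Finset.Icc 1 k, αw k t * α (k+1) ^ 2 := by
          rw [← Finset.sum_mul, hweights k hk, one_mul]
      _ ≤ ∑ t ∈ Finset.Icc 1 k, αw k t * α t ^ 2 := by
          apply Finset.sum_le_sum
          intro t ht
          have ht1 := (mem_Icc.1 ht).1
          have ht2 := (mem_Icc.1 ht).2
          apply mul_le_mul_of_nonneg_left _ (hαw_nonneg k t ht1)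
          apply pow_le_pow_left₀ (le_of_lt (hαpos (k+1))) (hα_anti t (k+1) (by omega))
  -- A antitone
  have hA_step : ∀ k, 1 ≤ k → A (k+1) ≤ A k := by
    intro k hk
    rw [hA_rec k hk]
    have h1 := hA_lb k hk
    have h2 := hαpos (k+1)
    nlinarith
  have hA_anti : ∀ t k, 1 ≤ t → t ≤ k → A k ≤ A t := by
    intro t k ht htk
    induction k, htk using Nat.le_induction with
    | base => exact le_refl _
    | succ k hk ih => exact le_trans (hA_step k (by omega)) ih
  -- tail sum identity
  have htail_id : ∀ t, 1 ≤ t → ∀ K, t ≤ K →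
      ∑ k ∈ Finset.Icc t K, αw k t
        = α t * (1 + (t:ℝ)/H) - ((K:ℝ)/H) * αw K t := by
    intro t ht K hK
    induction K, hK using Nat.le_induction with
    | base =>
      rw [Finset.Icc_self, Finset.sum_singleton, hαw_self]
      field_simp
      ring
    | succ K hK ih =>
      rw [← Finset.Ico_add_one_right_eq_Icc, Finset.sum_Ico_succ_top (by omega), Finset.Ico_add_one_right_eq_Icc, ih]
      rw [hαw_step K t hK]
      have hne2 : ((H:ℝ)+(K:ℝ)+1) ≠ 0 := by positivity
      have hKα : 1 - α (K+1) = (K:ℝ)/((H:ℝ)+(K:ℝ)+1) := by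
        rw [hα]
        push_cast
        rw [show (H:ℝ) + ((K:ℝ)+1) = (H:ℝ)+(K:ℝ)+1 by ring]
        rw [eq_div_iff hne2, sub_mul, div_mul_cancel₀ _ hne2]
        ring
      rw [hKα]
      have hne1 : ((H:ℝ)) ≠ 0 := ne_of_gt hHpos
      push_cast
      field_simp
      try ring
  have htail : ∀ t, 1 ≤ t → ∀ K, t ≤ K →
      ∑ k ∈ Finset.Icc t K, αw k t ≤ ((H:ℝ)+1)/H := by
    intro t ht K hK
    rw [htail_id t ht K hK]
    have h1 : α t * (1 + (t:ℝ)/H) = ((H:ℝ)+1)/H * (((H:ℝ)+t)/((H:ℝ)+t)) := by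
      rw [hα]; field_simp; try ring
    have h2 : 0 ≤ ((K:ℝ)/H) * αw K t := by
      apply mul_nonneg (by positivity) (hαw_nonneg K t ht)
    rw [h1, div_self (ne_of_gt (hden t)), mul_one]
    linarith
  -- sum of α^2
  have hsq : ∀ k : ℕ, ∑ t ∈ Finset.Icc 1 k, α t ^ 2 ≤ ((H:ℝ)+1)^2 * (1/H - 1/((H:ℝ)+k)) := by
    intro k
    induction k with
    | zero => simp
    | succ k ih =>
      rw [← Finset.Ico_add_one_right_eq_Icc, Finset.sum_Ico_succ_top (by omega), Finset.Ico_add_one_right_eq_Icc]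
      have h1 : (0:ℝ) < (H:ℝ)+k := hden k
      have h2 : (0:ℝ) < (H:ℝ)+k+1 := by linarith
      have hstep : α (k+1) ^ 2 ≤ ((H:ℝ)+1)^2 * (1/((H:ℝ)+k) - 1/((H:ℝ)+k+1)) := by
        have heq : ((H:ℝ)+1)^2 * (1/((H:ℝ)+k) - 1/((H:ℝ)+k+1))
            = ((H:ℝ)+1)^2 / (((H:ℝ)+k)*((H:ℝ)+k+1)) := by
          field_simp
          try ring
        rw [hα, heq]
        push_cast
        rw [div_pow, show (H:ℝ) + ((k:ℝ)+1) = (H:ℝ)+(k:ℝ)+1 by ring]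
        gcongr
        all_goals nlinarith
      push_cast at ih hstep ⊢
      refine le_trans (add_le_add ih hstep) (le_of_eq ?_)
      ring
  have hsq' : ∀ k : ℕ, ∑ t ∈ Finset.Icc 1 k, α t ^ 2 ≤ ((H:ℝ)+1)^2 / H := by
    intro k
    refine le_trans (hsq k) ?_
    have : (0:ℝ) < (H:ℝ)+k := hden k
    rw [div_eq_mul_one_div (((H:ℝ)+1)^2) (H:ℝ)]
    apply mul_le_mul_of_nonneg_left _ (by positivity)
    have : 0 < 1/((H:ℝ)+k) := by positivity
    linarith
  -- main
  intro k hk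
  have hswap : ∑ t ∈ Finset.Icc 1 k, A t
      = ∑ j ∈ Finset.Icc 1 k, α j ^ 2 * ∑ t ∈ Finset.Icc j k, αw t j := by
    have h1 : ∑ t ∈ Finset.Icc 1 k, A t
        = ∑ t ∈ Finset.Ico 1 (k+1), ∑ j ∈ Finset.Ico 1 (t+1), αw t j * α j ^ 2 := by
      rw [Finset.Ico_add_one_right_eq_Icc]
      apply Finset.sum_congr rfl
      intro t _
      rw [hA, Finset.Ico_add_one_right_eq_Icc]
    rw [h1, ← Finset.sum_Ico_Ico_comm 1 (k+1) (fun j t => αw t j * α j ^ 2)]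
    rw [Finset.Ico_add_one_right_eq_Icc]
    apply Finset.sum_congr rfl
    intro j _
    rw [Finset.Ico_add_one_right_eq_Icc, Finset.mul_sum]
    apply Finset.sum_congr rfl
    intro t _
    ring
  have hsum_bound : ∑ t ∈ Finset.Icc 1 k, A t ≤ ((H:ℝ)+1)^3 / (H:ℝ)^2 := by
    rw [hswap]
    calc ∑ j ∈ Finset.Icc 1 k, α j ^ 2 * ∑ t ∈ Finset.Icc j k, αw t j
        ≤ ∑ j ∈ Finset.Icc 1 k, α j ^ 2 * (((H:ℝ)+1)/H) := by
          apply Finset.sum_le_sum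
          intro j hj
          have hj1 := (mem_Icc.1 hj).1
          have hj2 := (mem_Icc.1 hj).2
          exact mul_le_mul_of_nonneg_left (htail j hj1 k hj2) (by positivity)
      _ = (∑ j ∈ Finset.Icc 1 k, α j ^ 2) * (((H:ℝ)+1)/H) := by
          rw [Finset.sum_mul]
      _ ≤ ((H:ℝ)+1)^2 / H * (((H:ℝ)+1)/H) := by
          apply mul_le_mul_of_nonneg_right (hsq' k) (by positivity)
      _ = ((H:ℝ)+1)^3 / (H:ℝ)^2 := by
          field_simp
  have hkA : (k:ℝ) * A k ≤ ∑ t ∈ Finset.Icc 1 k, A t := by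
    have h1 : ∑ t ∈ Finset.Icc 1 k, A k ≤ ∑ t ∈ Finset.Icc 1 k, A t := by
      apply Finset.sum_le_sum
      intro t ht
      exact hA_anti t k (mem_Icc.1 ht).1 (mem_Icc.1 ht).2
    rw [Finset.sum_const, Nat.card_Icc] at h1
    simpa [Nat.add_sub_cancel, nsmul_eq_mul] using h1
  have hkpos : (0:ℝ) < k := by exact_mod_cast hk
  rw [ge_iff_le] at hk
  have final : (k:ℝ) * A k ≤ ((H:ℝ)+1)^3 / (H:ℝ)^2 := le_trans hkA hsum_bound
  rw [le_div_iff₀ (by positivity : (0:ℝ) < (H:ℝ)^2 * k)]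
  calc A k * ((H:ℝ)^2 * k) = ((k:ℝ) * A k) * (H:ℝ)^2 := by ring
    _ ≤ (((H:ℝ)+1)^3 / (H:ℝ)^2) * (H:ℝ)^2 := by
        apply mul_le_mul_of_nonneg_right final (by positivity)
    _ = ((H:ℝ)+1)^3 := by field_simp
    _ = ((H:ℝ)+1)^3 := rfl
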